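/- Let G be a finite simple graph on vertex set V, let w : V → ℝ≥0 be a weight function, and fix a linear order on V along which w is non-increasing. Let s ≥ 1 and x ≥ 0 be real numbers. Suppose A ⊆ V is a vertex set such that no nonempty subset of V that is s-principal in V and has average degree at least x in G is contained in A (i.e., A contains no s-principal set of average degree ≥ x in G), and suppose that every subset of A that is an independent set of G has total w-weight at most 1. Then ∑_{v∈A} w(v) ≤ 2·⌊x+1⌋ + (2/s)·∑_{v∈V} w(v). (The average degree of a nonempty set X in G is 2·e_G(X)/|X|, where e_G(X) is the number of edges of G with both endpoints in X.) -/

import Mathlib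

open Finset

/-- The set of the first `k` elements of the finite linearly ordered set `Y`
(all of `Y` if `k > |Y|`). -/
def firstK {α : Type*} [LinearOrder α] (Y : Finset α) (k : ℕ) : Finset α :=
  ((Y.sort (· ≤ ·)).take k).toFinset



lemma firstK_aux {α : Type*} [LinearOrder α] (Y : Finset α) (κ : ℕ) {v : α}
    (hv : v ∈ Y) (hnv : v ∉ firstK Y κ) {p : ℕ} (hp : p < κ) :
    ∃ (h : p < (Y.sort (· ≤ ·)).length), (Y.sort (· ≤ ·)).get ⟨p, h⟩ ≤ v := by
  classical
  set L := Y.sort (· ≤ ·) with hL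
  have hvL : v ∈ L := (Finset.mem_sort _).2 hv
  have hvt : v ∉ L.take κ := fun h => hnv (List.mem_toFinset.2 h)
  have hvd : v ∈ L.drop κ := by
    rcases (List.mem_append.1 (by rw [List.take_append_drop κ L]; exact hvL)) with h | h
    · exact absurd h hvt
    · exact h
  obtain ⟨j, hj, hjv⟩ := List.mem_iff_getElem.1 hvd
  rw [List.getElem_drop] at hjv
  have hlen : κ + j < L.length := by
    have := hj; rw [List.length_drop] at this
    omega
  have hplen : p < L.length := by omega
  refine ⟨hplen, ?_⟩
  have h2 : L.get ⟨p, hplen⟩ ≤ L.get ⟨κ + j, hlen⟩ :=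
    (Y.pairwise_sort (· ≤ ·)).rel_get_of_le (a := ⟨p, hplen⟩) (b := ⟨κ + j, hlen⟩) (by simp; omega)
  rw [List.get_eq_getElem, List.get_eq_getElem] at h2
  rw [List.get_eq_getElem]
  rw [hjv] at h2
  exact h2

lemma mem_firstK_of_le {α : Type*} [LinearOrder α] {Y : Finset α} {κ : ℕ} {u v : α}
    (hu : u ∈ Y) (hv : v ∈ firstK Y κ) (huv : u ≤ v) : u ∈ firstK Y κ := by
  classical
  by_contra hnu
  set L := Y.sort (· ≤ ·) with hL
  have hvt : v ∈ L.take κ := List.mem_toFinset.1 hv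
  obtain ⟨q, hq, hqv⟩ := List.mem_iff_getElem.1 hvt
  rw [List.getElem_take] at hqv
  have hqκ : q < κ := by have := hq; rw [List.length_take] at this; omega
  obtain ⟨h, hle⟩ := firstK_aux Y κ hu hnu hqκ
  rw [List.get_eq_getElem] at hle
  have : v ≤ u := by rw [← hqv]; exact hle
  have huv2 : u = v := le_antisymm huv this
  exact hnu (huv2 ▸ hv)

lemma firstK_card_lt {α : Type*} [LinearOrder α] {Y : Finset α} {κ : ℕ} {v : α}
    (hv : v ∈ Y) (hnv : v ∉ firstK Y κ) : κ < Y.card := by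
  by_contra h
  push_neg at h
  have he : firstK Y κ = Y := by
    unfold firstK
    rw [List.take_of_length_le (by rw [Finset.length_sort]; exact h), Finset.sort_toFinset]
  exact hnv (by rw [he]; exact hv)


lemma pairing_sum {ι : Type*} [LinearOrder ι] (g : ι → ℝ)
    (hg : ∀ i j : ι, i ≤ j → g j ≤ g i) (hg0 : ∀ i, 0 ≤ g i) (S T : Finset ι)
    (h : ∀ i : ι, (S.filter (· ≤ i)).card ≤ (T.filter (· ≤ i)).card) :
    ∑ i ∈ S, g i ≤ ∑ i ∈ T, g i := by
  classical
  induction S using Finset.strongInduction generalizing T with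
  | _ S ih =>
  rcases S.eq_empty_or_nonempty with rfl | hS
  · simpa using Finset.sum_nonneg fun i _ => hg0 i
  · set a := S.max' hS with ha
    have hSa : S.filter (· ≤ a) = S := by
      apply Finset.filter_true_of_mem
      intro i hi; exact S.le_max' i hi
    have hTa : (T.filter (· ≤ a)).Nonempty := by
      rw [← Finset.card_pos]
      calc 0 < S.card := Finset.card_pos.2 hS
        _ = (S.filter (· ≤ a)).card := by rw [hSa]
        _ ≤ _ := h a
    set b := (T.filter (· ≤ a)).max' hTa with hb
    have hbT : b ∈ T := (Finset.mem_filter.1 ((T.filter (· ≤ a)).max'_mem hTa)).1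
    have hba : b ≤ a := (Finset.mem_filter.1 ((T.filter (· ≤ a)).max'_mem hTa)).2
    have key : ∀ i : ι, ((S.erase a).filter (· ≤ i)).card ≤ ((T.erase b).filter (· ≤ i)).card := by
      intro i
      rw [Finset.filter_erase, Finset.filter_erase]
      by_cases hia : a ≤ i
      · have h1 : S.filter (· ≤ i) = S := by
          apply Finset.filter_true_of_mem
          intro j hj; exact le_trans (S.le_max' j hj) hia
        have hamem : a ∈ S.filter (· ≤ i) := by rw [h1]; exact S.max'_mem hS
        have hbmem : b ∈ T.filter (· ≤ i) := Finset.mem_filter.2 ⟨hbT, le_trans hba hia⟩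
        rw [Finset.card_erase_of_mem hamem, Finset.card_erase_of_mem hbmem]
        have := h i
        omega
      · push_neg at hia
        have hanotin : a ∉ S.filter (· ≤ i) := fun hmem => absurd (Finset.mem_filter.1 hmem).2 (not_le.2 hia)
        rw [Finset.erase_eq_of_notMem hanotin]
        by_cases hbi : b ≤ i
        · have hsub : T.filter (· ≤ a) ⊆ T.filter (· ≤ i) := by
            intro t ht
            rcases Finset.mem_filter.1 ht with ⟨htT, hta⟩
            exact Finset.mem_filter.2 ⟨htT, le_trans ((T.filter (· ≤ a)).le_max' t ht) hbi⟩
          have hcard1 : S.card ≤ (T.filter (· ≤ i)).card := by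
            calc S.card = (S.filter (· ≤ a)).card := by rw [hSa]
              _ ≤ (T.filter (· ≤ a)).card := h a
              _ ≤ _ := Finset.card_le_card hsub
          have hlt : (S.filter (· ≤ i)).card < S.card :=
            Finset.card_lt_card (Finset.ssubset_iff_of_subset (Finset.filter_subset _ _) |>.2
              ⟨a, S.max'_mem hS, hanotin⟩)
          have hbmem : b ∈ T.filter (· ≤ i) := Finset.mem_filter.2 ⟨hbT, hbi⟩
          rw [Finset.card_erase_of_mem hbmem]
          omega
        · have : b ∉ T.filter (· ≤ i) := fun hmem => absurd (Finset.mem_filter.1 hmem).2 hbi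
          rw [Finset.erase_eq_of_notMem this]
          exact h i
    have hrec := ih (S.erase a) (Finset.erase_ssubset (S.max'_mem hS)) (T.erase b) key
    have e1 : ∑ i ∈ S, g i = ∑ i ∈ S.erase a, g i + g a :=
      (Finset.sum_erase_add S g (S.max'_mem hS)).symm
    have e2 : ∑ i ∈ T, g i = ∑ i ∈ T.erase b, g i + g b :=
      (Finset.sum_erase_add T g hbT).symm
    rw [e1, e2]
    exact add_le_add hrec (hg b a hba)


lemma charge_sum (a : ℝ) (ha : 1 ≤ a) (f : ℕ → ℝ) (hf0 : ∀ p, 0 ≤ f p)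
    (hf : ∀ p q : ℕ, 1 ≤ p → p ≤ q → f q ≤ f p)
    (c : ℕ → ℝ) (K : ℕ)
    (hc : ∀ k ∈ Finset.Icc 1 K, ∀ p ∈ Finset.Icc 1 ⌈a * k⌉₊, c k ≤ f p) :
    ∑ k ∈ Finset.Icc 1 K, c k ≤ (1/a) * ∑ p ∈ Finset.Icc 1 ⌈a * K⌉₊, f p := by
  have ha0 : (0:ℝ) < a := lt_of_lt_of_le one_pos ha
  have main : ∀ K : ℕ, (∀ k ∈ Finset.Icc 1 K, ∀ p ∈ Finset.Icc 1 ⌈a * k⌉₊, c k ≤ f p) →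
      ∑ k ∈ Finset.Icc 1 K, c k ≤
        (1/a) * (∑ p ∈ Finset.Icc 1 ⌈a * K⌉₊, f p - ((⌈a * K⌉₊ : ℝ) - a * K) * f ⌈a * K⌉₊) := by
    intro K
    induction K with
    | zero => intro _; simp
    | succ K ihK =>
      intro hcK
      set P := ⌈a * K⌉₊ with hP
      set Q := ⌈a * (K+1:ℕ)⌉₊ with hQ
      have haK : a * K ≤ (P:ℝ) := Nat.le_ceil _
      have haK1 : a * (K+1:ℕ) ≤ (Q:ℝ) := Nat.le_ceil _
      have haKnn : (0:ℝ) ≤ a * K := by positivity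
      have hPQ : P < Q := by
        have h1 : (P:ℝ) < a * K + 1 := Nat.ceil_lt_add_one haKnn
        have h2 : a * K + 1 ≤ a * (K+1:ℕ) := by push_cast; nlinarith
        exact_mod_cast lt_of_lt_of_le h1 (le_trans h2 haK1)
      have hQ1 : 1 ≤ Q := by omega
      have hsplitc : ∑ k ∈ Finset.Icc 1 (K+1), c k = ∑ k ∈ Finset.Icc 1 K, c k + c (K+1) :=
        Finset.sum_Icc_succ_top (by omega) c
      have hIoc : ∀ n : ℕ, Finset.Icc 1 n = Finset.Ioc 0 n := by
        intro n; ext z; simp only [Finset.mem_Icc, Finset.mem_Ioc]; omega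
      have hsplitf : ∑ p ∈ Finset.Icc 1 Q, f p
          = ∑ p ∈ Finset.Icc 1 P, f p + ∑ p ∈ Finset.Ioc P Q, f p := by
        rw [hIoc, hIoc]
        exact (Finset.sum_Ioc_consecutive f (Nat.zero_le P) (le_of_lt hPQ)).symm
      have hΔ : ((Q:ℝ) - P) * f Q ≤ ∑ p ∈ Finset.Ioc P Q, f p := by
        have hb : ∀ p ∈ Finset.Ioc P Q, f Q ≤ f p := by
          intro p hp
          rcases Finset.mem_Ioc.1 hp with ⟨h1, h2⟩
          exact hf p Q (by omega) h2
        have := Finset.card_nsmul_le_sum (Finset.Ioc P Q) f (f Q) hb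
        rw [nsmul_eq_mul, Nat.card_Ioc, Nat.cast_sub (le_of_lt hPQ)] at this
        exact this
      have hPterm : ((P:ℝ) - a * K) * f Q ≤ ((P:ℝ) - a * K) * f P := by
        rcases Nat.eq_zero_or_pos P with hP0 | hP1
        · have hz : (P:ℝ) - a * K = 0 := by
            rw [hP0] at haK
            push_cast at haK
            rw [hP0]; push_cast; linarith
          rw [hz, zero_mul, zero_mul]
        · exact mul_le_mul_of_nonneg_left (hf P Q hP1 (le_of_lt hPQ)) (by linarith)
      have hcQ : c (K+1) ≤ f Q := by
        exact hcK (K+1) (Finset.mem_Icc.2 ⟨by omega, le_refl _⟩) Q (Finset.mem_Icc.2 ⟨hQ1, le_refl _⟩)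
      have hih := ihK (fun k hk => hcK k (Finset.mem_Icc.2 ⟨(Finset.mem_Icc.1 hk).1, by
        have := (Finset.mem_Icc.1 hk).2; omega⟩))
      rw [hsplitc, hsplitf]
      have key : c (K+1) ≤ (1/a) * (∑ p ∈ Finset.Ioc P Q, f p
          - ((Q:ℝ) - a * (K+1:ℕ)) * f Q + ((P:ℝ) - a * K) * f P) := by
        have h3 : f Q ≤ (1/a) * (((Q:ℝ) - P) * f Q - ((Q:ℝ) - a * (K+1:ℕ)) * f Q
            + ((P:ℝ) - a * K) * f Q) := by
          have : ((Q:ℝ) - P) * f Q - ((Q:ℝ) - a * (K+1:ℕ)) * f Q + ((P:ℝ) - a * K) * f Q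
              = a * f Q := by push_cast; ring
          rw [this]
          rw [← mul_assoc, one_div, inv_mul_cancel₀ (ne_of_gt ha0), one_mul]
        refine le_trans hcQ (le_trans h3 ?_)
        apply mul_le_mul_of_nonneg_left _ (by positivity)
        linarith [hΔ, hPterm]
      calc ∑ k ∈ Finset.Icc 1 K, c k + c (K+1)
          ≤ (1/a) * (∑ p ∈ Finset.Icc 1 P, f p - ((P:ℝ) - a * K) * f P)
            + (1/a) * (∑ p ∈ Finset.Ioc P Q, f p - ((Q:ℝ) - a * (K+1:ℕ)) * f Q
              + ((P:ℝ) - a * K) * f P) := add_le_add hih key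
        _ = (1/a) * (∑ p ∈ Finset.Icc 1 P, f p + ∑ p ∈ Finset.Ioc P Q, f p
              - ((Q:ℝ) - a * (K+1:ℕ)) * f Q) := by ring
  have := main K hc
  have hnn : 0 ≤ ((⌈a * K⌉₊:ℝ) - a * K) * f ⌈a * K⌉₊ := by
    apply mul_nonneg _ (hf0 _)
    have := Nat.le_ceil (a * (K:ℕ)); linarith
  refine le_trans this ?_
  apply mul_le_mul_of_nonneg_left (by linarith) (by positivity)


open Classical in
lemma greedy_coloring {m d : ℕ} (hd : 0 < d) (adj : Fin m → Fin m → Prop) (L : Finset (Fin m))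
    (deg : ∀ i ∈ L, ∀ Sf : Finset (Fin m), (∀ j ∈ Sf, j ∈ L ∧ j < i ∧ adj j i) → Sf.card ≤ d - 1) :
    ∃ c : Fin m → Fin d, ∀ i ∈ L, ∀ j ∈ L, j < i → adj j i → c j ≠ c i := by
  classical
  suffices h : ∀ k : ℕ, ∃ c : Fin m → Fin d,
      ∀ i ∈ L, (i:ℕ) < k → ∀ j ∈ L, j < i → adj j i → c j ≠ c i by
    obtain ⟨c, hc⟩ := h m
    exact ⟨c, fun i hi => hc i hi i.isLt⟩
  intro k
  induction k with
  | zero => exact ⟨fun _ => ⟨0, hd⟩, fun i _ hi => absurd hi (by omega)⟩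
  | succ k ih =>
    obtain ⟨c, hc⟩ := ih
    by_cases hk : k < m
    · set i₀ : Fin m := ⟨k, hk⟩ with hi₀
      by_cases hiL : i₀ ∈ L
      · set B := (L.filter (fun j => j < i₀ ∧ adj j i₀)).image c with hB
        have hBcard : B.card < d := by
          calc B.card ≤ (L.filter (fun j => j < i₀ ∧ adj j i₀)).card := Finset.card_image_le
            _ ≤ d - 1 := deg i₀ hiL _ (fun j hj => by
                rcases Finset.mem_filter.1 hj with ⟨h1, h2, h3⟩
                exact ⟨h1, h2, h3⟩)
            _ < d := by omega
        have hBne : B ≠ Finset.univ := by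
          intro h
          rw [h, Finset.card_univ, Fintype.card_fin] at hBcard
          omega
        obtain ⟨γ, hγ⟩ : ∃ γ : Fin d, γ ∉ B := by
          by_contra hcon
          push_neg at hcon
          exact hBne (Finset.eq_univ_iff_forall.2 hcon)
        refine ⟨Function.update c i₀ γ, ?_⟩
        intro i hi hik j hj hji hadj
        by_cases hii : i = i₀
        · subst hii
          have hjne : j ≠ i₀ := ne_of_lt hji
          rw [Function.update_self, Function.update_of_ne hjne]
          intro heq
          exact hγ (heq ▸ Finset.mem_image_of_mem c
            (Finset.mem_filter.2 ⟨hj, hji, hadj⟩))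
        · have hik' : (i:ℕ) < k := by
            rcases Nat.lt_succ_iff_lt_or_eq.1 hik with h | h
            · exact h
            · exact absurd (Fin.ext h : i = i₀) hii
          have hjne : j ≠ i₀ := by
            intro h; rw [h] at hji
            have h1 : (k:ℕ) < (i:ℕ) := hji
            omega
          rw [Function.update_of_ne hjne, Function.update_of_ne hii]
          exact hc i hi hik' j hj hji hadj
      · refine ⟨c, ?_⟩
        intro i hi hik j hj hji hadj
        have : (i:ℕ) < k := by
          rcases Nat.lt_succ_iff_lt_or_eq.1 hik with h | h
          · exact h
          · exact absurd ((Fin.ext h : i = i₀) ▸ hi) hiL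
        exact hc i hi this j hj hji hadj
    · refine ⟨c, fun i hi _ => hc i hi (by omega)⟩

/-- For a real `s ≥ 1`, a subset `X ⊆ Y` is `s`-principal in `Y` if `X` is nonempty and
`X ⊆ Y_{⌊s·|X|⌋}`, i.e. all elements of `X` are among the first `⌊s·|X|⌋` elements of `Y`. -/
def IsPrincipal {α : Type*} [LinearOrder α] (s : ℝ) (Y X : Finset α) : Prop :=
  X.Nonempty ∧ X ⊆ firstK Y ⌊s * X.card⌋₊
open Classical in
/-- The number of edges of `G` with both endpoints in `A`. -/
noncomputable def edgesIn {V : Type*} [Fintype V] [DecidableEq V] (G : SimpleGraph V)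
    [DecidableRel G.Adj] (A : Finset V) : ℕ :=
  (G.edgeFinset.filter fun e => ∀ v ∈ e, v ∈ A).card

set_option maxHeartbeats 2000000 in
theorem weight_bound_of_no_principal {V : Type*} [Fintype V] [LinearOrder V]
    (G : SimpleGraph V) [DecidableRel G.Adj]
    (w : V → ℝ) (hw0 : ∀ v, 0 ≤ w v)
    (hmono : ∀ a b : V, a ≤ b → w b ≤ w a)
    (s x : ℝ) (hs : 1 ≤ s) (hx : 0 ≤ x) (A : Finset V)
    (hA : ∀ X ⊆ A, ¬ (IsPrincipal s Finset.univ X ∧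
          x ≤ 2 * (edgesIn G X : ℝ) / X.card))
    (hind : ∀ I ⊆ A, (∀ u ∈ I, ∀ v ∈ I, ¬ G.Adj u v) → ∑ v ∈ I, w v ≤ 1) :
    ∑ v ∈ A, w v ≤ 2 * (⌊x + 1⌋₊ : ℝ) + (2 / s) * ∑ v, w v := by
  classical
  have hs0 : (0:ℝ) < s := lt_of_lt_of_le one_pos hs
  have hW0 : (0:ℝ) ≤ ∑ v, w v := Finset.sum_nonneg fun v _ => hw0 v
  have hAW : ∑ v ∈ A, w v ≤ ∑ v, w v :=
    Finset.sum_le_sum_of_subset_of_nonneg (Finset.subset_univ A) (fun v _ _ => hw0 v)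
  by_cases hs2 : s < 2
  · have h1 : (1:ℝ) ≤ 2/s := by rw [le_div_iff₀ hs0]; linarith
    have : (2/s) * ∑ v, w v ≥ 1 * ∑ v, w v := mul_le_mul_of_nonneg_right h1 hW0
    have hd0 : (0:ℝ) ≤ 2 * (⌊x + 1⌋₊ : ℝ) := by positivity
    linarith
  push_neg at hs2
  -- setup
  set LV := (Finset.univ : Finset V).sort (· ≤ ·) with hLV
  set f : ℕ → ℝ := fun p => if h : p - 1 < LV.length then w (LV.get ⟨p-1, h⟩) else 0 with hf
  set m := A.card with hm
  set α : Fin m → V := fun i => ((A.orderIsoOfFin rfl) i : V) with hα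
  have hα_mono : StrictMono α := fun i j hij => (A.orderIsoOfFin rfl).strictMono hij
  have hα_inj : Function.Injective α := hα_mono.injective
  have hα_memA : ∀ i, α i ∈ A := fun i => ((A.orderIsoOfFin rfl) i).2
  have hα_surj : ∀ v ∈ A, ∃ i, α i = v := by
    intro v hv
    refine ⟨(A.orderIsoOfFin rfl).symm ⟨v, hv⟩, ?_⟩
    rw [hα]
    exact congrArg Subtype.val ((A.orderIsoOfFin rfl).apply_symm_apply ⟨v, hv⟩)
  set d := ⌊x + 1⌋₊ with hdd
  have hd1 : 1 ≤ d := by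
    rw [hdd]
    have : (1:ℝ) ≤ x + 1 := by linarith
    exact Nat.one_le_floor_iff _ |>.2 this
  have hxd : x < (d:ℝ) := by
    rw [hdd]
    have h1 : x + 1 - 1 < (⌊x + 1⌋₊ : ℝ) := Nat.sub_one_lt_floor (x+1)
    linarith
  set good : Fin m → Prop := fun i => α i ∈ firstK Finset.univ ⌊s*((i:ℕ)+1)⌋₊ with hgood
  set Good := Finset.univ.filter good with hGood
  set Bad := Finset.univ.filter (fun i => ¬ good i) with hBad
  set D : Fin m → ℕ :=
    fun i => (Finset.univ.filter (fun j => j < i ∧ G.Adj (α j) (α i))).card with hD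
  set H := Good.filter (fun i => d ≤ D i) with hH
  set Lo := Good.filter (fun i => ¬ d ≤ D i) with hLo
  set g : Fin m → ℝ := fun i => w (α i) with hg
  have hg0 : ∀ i, 0 ≤ g i := fun i => hw0 _
  have hgmono : ∀ i j : Fin m, i ≤ j → g j ≤ g i := by
    intro i j hij
    exact hmono _ _ (hα_mono.monotone hij)
  -- basic sums
  have sumA : ∑ v ∈ A, w v = ∑ i : Fin m, g i := by
    symm
    exact Finset.sum_bij (fun i _ => α i) (fun i _ => hα_memA i)
      (fun a _ b _ h => hα_inj h)
      (fun v hv => by obtain ⟨i, hi⟩ := hα_surj v hv; exact ⟨i, Finset.mem_univ _, hi⟩)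
      (fun i _ => rfl)
  have hf0 : ∀ p, 0 ≤ f p := by
    intro p
    rw [hf]
    dsimp only
    split
    · exact hw0 _
    · exact le_refl 0
  have hsorted : LV.Pairwise (· ≤ ·) := by rw [hLV]; exact Finset.pairwise_sort _ _
  have hfmono : ∀ p q : ℕ, 1 ≤ p → p ≤ q → f q ≤ f p := by
    intro p q hp hpq
    rw [hf]
    dsimp only
    by_cases hq : q - 1 < LV.length
    · have hp' : p - 1 < LV.length := by omega
      rw [dif_pos hq, dif_pos hp']
      exact hmono _ _ (hsorted.rel_get_of_le (by simp [Fin.le_def]; omega))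
    · rw [dif_neg hq]
      split
      · exact hw0 _
      · exact le_refl 0
  have hfnsum : ∑ p ∈ Finset.Icc 1 LV.length, f p = ∑ v, w v := by
    have himg : Finset.image (fun q => q + 1) (Finset.range LV.length)
        = Finset.Icc 1 LV.length := by
      ext z
      simp only [Finset.mem_image, Finset.mem_range, Finset.mem_Icc]
      constructor
      · rintro ⟨q, hq, rfl⟩; omega
      · intro hz; exact ⟨z - 1, by omega, by omega⟩
    rw [← himg, Finset.sum_image (by intro a _ b _ h; simp only at h; omega)]
    rw [← Fin.sum_univ_eq_sum_range (fun q => f (q+1)) LV.length]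
    have hpt : ∀ i : Fin LV.length, f ((i:ℕ)+1) = w (LV.get i) := by
      intro i
      rw [hf]
      dsimp only
      rw [dif_pos (by omega : (i:ℕ)+1-1 < LV.length)]
      congr 1
    rw [Finset.sum_congr rfl (fun i _ => hpt i)]
    exact Finset.sum_bij (fun i _ => LV.get i) (fun i _ => Finset.mem_univ _)
      (fun a _ b _ h => List.nodup_iff_injective_get.1
        (by rw [hLV]; exact Finset.sort_nodup _ _) h)
      (fun v _ => by
        obtain ⟨i, hi⟩ := List.mem_iff_get.1
          (show v ∈ LV by rw [hLV]; exact (Finset.mem_sort _).2 (Finset.mem_univ v))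
        exact ⟨i, Finset.mem_univ _, hi⟩)
      (fun i _ => rfl)
  have hfsum : ∀ N, ∑ p ∈ Finset.Icc 1 N, f p ≤ ∑ v, w v := by
    intro N
    by_cases hN : N ≤ LV.length
    · rw [← hfnsum]
      exact Finset.sum_le_sum_of_subset_of_nonneg
        (Finset.Icc_subset_Icc_right hN) (fun p _ _ => hf0 p)
    · push_neg at hN
      have hsplit : ∑ p ∈ Finset.Icc 1 N, f p
          = ∑ p ∈ Finset.Icc 1 LV.length, f p + ∑ p ∈ Finset.Ioc LV.length N, f p := by
        have hIoc : ∀ nn : ℕ, Finset.Icc 1 nn = Finset.Ioc 0 nn := fun nn => by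
          ext z; simp only [Finset.mem_Icc, Finset.mem_Ioc]; omega
        rw [hIoc, hIoc]
        exact (Finset.sum_Ioc_consecutive f (Nat.zero_le _) (le_of_lt hN)).symm
      have hz : ∑ p ∈ Finset.Ioc LV.length N, f p = 0 := by
        apply Finset.sum_eq_zero
        intro p hp
        have := Finset.mem_Ioc.1 hp
        rw [hf]
        dsimp only
        rw [dif_neg (by omega)]
      rw [hsplit, hz, add_zero, hfnsum]
  -- bad vertices are below prefix elements
  have hbadf : ∀ i : Fin m, ¬ good i → ∀ p ∈ Finset.Icc 1 ⌊s*((i:ℕ)+1)⌋₊, g i ≤ f p := by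
    intro i hgi p hp
    rcases Finset.mem_Icc.1 hp with ⟨hp1, hp2⟩
    obtain ⟨hlen, hle⟩ := firstK_aux Finset.univ ⌊s*((i:ℕ)+1)⌋₊ (Finset.mem_univ (α i)) hgi
      (show p - 1 < ⌊s*((i:ℕ)+1)⌋₊ by omega)
    rw [hg, hf]
    dsimp only
    rw [dif_pos (show p - 1 < LV.length from hlen)]
    exact hmono _ _ hle
  -- prefix sets
  set X : Fin m → Finset V := fun i => A.filter (· ≤ α i) with hX
  have hXsub : ∀ i, X i ⊆ A := fun i => Finset.filter_subset _ _
  have hXcard : ∀ i : Fin m, (X i).card = (i:ℕ)+1 := by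
    intro i
    have himg : (Finset.univ.filter (· ≤ i)).image α = X i := by
      ext v
      rw [hX]
      constructor
      · intro hv
        rcases Finset.mem_image.1 hv with ⟨j, hj, rfl⟩
        exact Finset.mem_filter.2 ⟨hα_memA j,
          hα_mono.monotone (Finset.mem_filter.1 hj).2⟩
      · intro hv
        rcases Finset.mem_filter.1 hv with ⟨hvA, hvle⟩
        obtain ⟨j, rfl⟩ := hα_surj v hvA
        exact Finset.mem_image.2 ⟨j, Finset.mem_filter.2 ⟨Finset.mem_univ _,
          hα_mono.le_iff_le.1 hvle⟩, rfl⟩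
    rw [← himg, Finset.card_image_of_injective _ hα_inj]
    have hIic : (Finset.univ.filter (· ≤ i) : Finset (Fin m)) = Finset.Iic i := by
      ext j; simp [Finset.mem_Iic]
    rw [hIic, Fin.card_Iic]
  have hgoodedge : ∀ i : Fin m, good i → 2*(edgesIn G (X i):ℝ) < x*((i:ℕ)+1) := by
    intro i hi
    have hprin : IsPrincipal s Finset.univ (X i) := by
      constructor
      · exact ⟨α i, by rw [hX]; exact Finset.mem_filter.2 ⟨hα_memA i, le_refl _⟩⟩
      · intro v hv
        rcases Finset.mem_filter.1 (by rw [hX] at hv; exact hv) with ⟨hvA, hvle⟩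
        have hcast : (((X i).card : ℕ) : ℝ) = ((i:ℕ):ℝ) + 1 := by
          rw [hXcard i]; push_cast; ring
        rw [hcast]
        exact mem_firstK_of_le (Finset.mem_univ v) hi hvle
    have hni := hA (X i) (hXsub i)
    rw [not_and] at hni
    have h2 := hni hprin
    push_neg at h2
    rw [hXcard i] at h2
    rw [div_lt_iff₀ (by positivity : (0:ℝ) < (((i:ℕ)+1 : ℕ):ℝ))] at h2
    calc 2*(edgesIn G (X i):ℝ) < x * (((i:ℕ)+1 : ℕ):ℝ) := h2
      _ = x*((i:ℕ)+1) := by push_cast; ring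
  have hedge_ge : ∀ i : Fin m, d * (H.filter (· ≤ i)).card ≤ edgesIn G (X i) := by
    intro i
    unfold edgesIn
    set T := H.filter (· ≤ i) with hT
    have h1 : T.card * d ≤ ∑ j ∈ T, D j := by
      have hdb : ∀ j ∈ T, d ≤ D j := by
        intro j hj
        exact (Finset.mem_filter.1 (Finset.mem_filter.1 hj).1).2
      have := Finset.card_nsmul_le_sum T D d hdb
      simpa [smul_eq_mul] using this
    have h2 : ∑ j ∈ T, D j
        = (T.sigma (fun j => Finset.univ.filter
            (fun j' => j' < j ∧ G.Adj (α j') (α j)))).card := (Finset.card_sigma _ _).symm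
    have h3 : (T.sigma (fun j => Finset.univ.filter
            (fun j' => j' < j ∧ G.Adj (α j') (α j)))).card
        ≤ (G.edgeFinset.filter fun e => ∀ v ∈ e, v ∈ X i).card := by
      apply Finset.card_le_card_of_injOn (fun p => s(α p.2, α p.1))
      · intro p hp
        rcases Finset.mem_sigma.1 hp with ⟨hp1, hp2⟩
        rcases Finset.mem_filter.1 hp2 with ⟨-, hlt, hadj⟩
        have hp1le : p.1 ≤ i := (Finset.mem_filter.1 hp1).2
        refine Finset.mem_filter.2 ⟨SimpleGraph.mem_edgeFinset.2 hadj, ?_⟩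
        intro v hv
        rcases Sym2.mem_iff.1 hv with rfl | rfl
        · rw [hX]
          exact Finset.mem_filter.2 ⟨hα_memA _,
            hα_mono.monotone (le_trans (le_of_lt hlt) hp1le)⟩
        · rw [hX]
          exact Finset.mem_filter.2 ⟨hα_memA _, hα_mono.monotone hp1le⟩
      · intro p hp q hq heq
        have hp2 := Finset.mem_filter.1 (Finset.mem_sigma.1 (Finset.mem_coe.1 hp)).2
        have hq2 := Finset.mem_filter.1 (Finset.mem_sigma.1 (Finset.mem_coe.1 hq)).2
        rcases hp2 with ⟨-, hplt, -⟩
        rcases hq2 with ⟨-, hqlt, -⟩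
        rw [Sym2.eq_iff] at heq
        rcases heq with ⟨h1', h2'⟩ | ⟨h1', h2'⟩
        · have e1 : p.2 = q.2 := hα_inj h1'
          have e2 : p.1 = q.1 := hα_inj h2'
          exact Sigma.ext e2 (by rw [e1])
        · exfalso
          have v1 : ((p.2 : Fin m):ℕ) = ((q.1 : Fin m):ℕ) := congrArg Fin.val (hα_inj h1')
          have v2 : ((p.1 : Fin m):ℕ) = ((q.2 : Fin m):ℕ) := congrArg Fin.val (hα_inj h2')
          have v3 : ((p.2 : Fin m):ℕ) < ((p.1 : Fin m):ℕ) := hplt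
          have v4 : ((q.2 : Fin m):ℕ) < ((q.1 : Fin m):ℕ) := hqlt
          omega
    calc d * T.card = T.card * d := Nat.mul_comm _ _
      _ ≤ ∑ j ∈ T, D j := h1
      _ = _ := h2
      _ ≤ _ := h3
  have hGB : Good ∪ Bad = Finset.univ := Finset.filter_union_filter_not_eq (p := good) Finset.univ
  have hHL : H ∪ Lo = Good := Finset.filter_union_filter_not_eq _ Good
  have hdisjGB : Disjoint Good Bad := Finset.disjoint_filter_filter_not Finset.univ Finset.univ good
  have hdisjHL : Disjoint H Lo := Finset.disjoint_filter_filter_not Good Good _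
  have hpartition : ∀ i : Fin m,
      (H.filter (· ≤ i)).card + (Lo.filter (· ≤ i)).card + (Bad.filter (· ≤ i)).card
        = (i:ℕ) + 1 := by
    intro i
    have e0 : (Finset.univ.filter (· ≤ i) : Finset (Fin m)).card = (i:ℕ)+1 := by
      have hIic : (Finset.univ.filter (· ≤ i) : Finset (Fin m)) = Finset.Iic i := by
        ext j; simp [Finset.mem_Iic]
      rw [hIic, Fin.card_Iic]
    have e1 : (Finset.univ.filter (· ≤ i) : Finset (Fin m)).card
        = (Good.filter (· ≤ i)).card + (Bad.filter (· ≤ i)).card := by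
      rw [← hGB, Finset.filter_union]
      exact Finset.card_union_of_disjoint
        (hdisjGB.mono (Finset.filter_subset _ _) (Finset.filter_subset _ _))
    have e2 : (Good.filter (· ≤ i)).card
        = (H.filter (· ≤ i)).card + (Lo.filter (· ≤ i)).card := by
      rw [← hHL, Finset.filter_union]
      exact Finset.card_union_of_disjoint
        (hdisjHL.mono (Finset.filter_subset _ _) (Finset.filter_subset _ _))
    omega
  have hsmall : ∀ i : Fin m, good i →
      (H.filter (· ≤ i)).card + 1 ≤ (Lo.filter (· ≤ i)).card + (Bad.filter (· ≤ i)).card := by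
    intro i hi
    have h1 := hgoodedge i hi
    have h2 := hedge_ge i
    have h3 := hpartition i
    have h4 : (d:ℝ) * (H.filter (· ≤ i)).card ≤ (edgesIn G (X i) : ℝ) := by exact_mod_cast h2
    have h5 : 2 * ((d:ℝ) * (H.filter (· ≤ i)).card) < (d:ℝ)*((i:ℕ)+1) := by
      have hxi : x*((i:ℕ)+1) ≤ (d:ℝ)*((i:ℕ)+1) := by
        apply mul_le_mul_of_nonneg_right (le_of_lt hxd) (by positivity)
      nlinarith
    have hd0 : (0:ℝ) < d := by exact_mod_cast hd1
    have h6 : 2 * ((H.filter (· ≤ i)).card:ℝ) < ((i:ℕ)+1:ℝ) := by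
      nlinarith
    have h7 : 2 * (H.filter (· ≤ i)).card < (i:ℕ) + 1 := by exact_mod_cast h6
    omega
  -- the distinguished first bad element and Bad'
  set Bad' := if h : Bad.Nonempty then Bad.erase (Bad.min' h) else (∅ : Finset (Fin m)) with hBad'
  have hBad'sub : Bad' ⊆ Bad := by
    rw [hBad']
    split
    · exact Finset.erase_subset _ _
    · exact Finset.empty_subset _
  have hBad'card : ∀ i : Fin m, (Bad.filter (· ≤ i)).card ≤ 1 + (Bad'.filter (· ≤ i)).card := by
    intro i
    rw [hBad']
    split
    · next h =>
      rw [Finset.filter_erase]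
      have h1 := Finset.pred_card_le_card_erase
        (s := Bad.filter (· ≤ i)) (a := Bad.min' h)
      omega
    · next h =>
      have hbe : Bad = ∅ := Finset.not_nonempty_iff_eq_empty.1 h
      rw [hbe]
      simp
  have cond : ∀ i : Fin m,
      (H.filter (· ≤ i)).card ≤ ((Lo ∪ Bad').filter (· ≤ i)).card := by
    intro i
    have hcardu : ((Lo ∪ Bad').filter (· ≤ i)).card
        = (Lo.filter (· ≤ i)).card + (Bad'.filter (· ≤ i)).card := by
      rw [Finset.filter_union]
      exact Finset.card_union_of_disjoint
        ((hdisjGB.mono (Finset.filter_subset _ _) hBad'sub).mono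
          (Finset.filter_subset _ _) (Finset.filter_subset _ _))
    rw [hcardu]
    by_cases hHe : (H.filter (· ≤ i)).Nonempty
    · obtain ⟨h₀, hh₀⟩ := hHe
      have hGne : (Good.filter (· ≤ i)).Nonempty := by
        rcases Finset.mem_filter.1 hh₀ with ⟨hH0, hle0⟩
        exact ⟨h₀, Finset.mem_filter.2 ⟨(Finset.mem_filter.1 hH0).1, hle0⟩⟩
      set i' := (Good.filter (· ≤ i)).max' hGne with hi'
      have hi'mem := (Good.filter (· ≤ i)).max'_mem hGne
      have hi'G : i' ∈ Good := (Finset.mem_filter.1 hi'mem).1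
      have hi'le : i' ≤ i := (Finset.mem_filter.1 hi'mem).2
      have hgoodi' : good i' := (Finset.mem_filter.1 hi'G).2
      have hHeq : H.filter (· ≤ i) = H.filter (· ≤ i') := by
        ext j
        simp only [Finset.mem_filter]
        constructor
        · rintro ⟨hjH, hji⟩
          refine ⟨hjH, Finset.le_max' _ _ ?_⟩
          exact Finset.mem_filter.2 ⟨(Finset.mem_filter.1 hjH).1, hji⟩
        · rintro ⟨hjH, hji'⟩
          exact ⟨hjH, le_trans hji' hi'le⟩
      have h1 := hsmall i' hgoodi'
      have h2 := hBad'card i'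
      have hmL : (Lo.filter (· ≤ i')).card ≤ (Lo.filter (· ≤ i)).card :=
        Finset.card_le_card (Finset.monotone_filter_right _
          (fun j _ (hj : j ≤ i') => le_trans hj hi'le))
      have hmB : (Bad'.filter (· ≤ i')).card ≤ (Bad'.filter (· ≤ i)).card :=
        Finset.card_le_card (Finset.monotone_filter_right _
          (fun j _ (hj : j ≤ i') => le_trans hj hi'le))
      rw [hHeq]
      omega
    · rw [Finset.not_nonempty_iff_eq_empty.1 hHe]
      simp
  have hdisj : Disjoint Lo Bad' := by
    exact hdisjGB.mono (Finset.filter_subset _ _) hBad'sub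
  have sumH_le : ∑ i ∈ H, g i ≤ ∑ i ∈ Lo, g i + ∑ i ∈ Bad', g i := by
    have := pairing_sum g hgmono hg0 H (Lo ∪ Bad') cond
    rwa [Finset.sum_union hdisj] at this
  have sumLo_le : ∑ i ∈ Lo, g i ≤ (d:ℝ) := by
    obtain ⟨c, hc⟩ := greedy_coloring (m := m) (d := d) (by omega)
      (fun j i => G.Adj (α j) (α i)) Lo (by
        intro i hiL Sf hSf
        have hDi : D i < d := lt_of_not_ge (Finset.mem_filter.1 hiL).2
        refine le_trans (Finset.card_le_card ?_) (show D i ≤ d - 1 by omega)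
        intro j hj
        exact Finset.mem_filter.2 ⟨Finset.mem_univ _, (hSf j hj).2⟩)
    have hone : ∀ γ : Fin d, ∑ i ∈ Lo.filter (fun i => c i = γ), g i ≤ 1 := by
      intro γ
      have himg : ∑ i ∈ Lo.filter (fun i => c i = γ), g i
          = ∑ v ∈ (Lo.filter (fun i => c i = γ)).image α, w v :=
        (Finset.sum_image (fun a _ b _ h => hα_inj h)).symm
      rw [himg]
      apply hind
      · intro v hv
        rcases Finset.mem_image.1 hv with ⟨j, _, rfl⟩
        exact hα_memA j
      · intro u hu v hv
        rcases Finset.mem_image.1 hu with ⟨iu, hiu, rfl⟩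
        rcases Finset.mem_image.1 hv with ⟨iv, hiv, rfl⟩
        rcases Finset.mem_filter.1 hiu with ⟨hiuL, hcu⟩
        rcases Finset.mem_filter.1 hiv with ⟨hivL, hcv⟩
        rcases lt_trichotomy iu iv with hlt | heq | hgt
        · intro hadj
          exact hc iv hivL iu hiuL hlt hadj (hcu.trans hcv.symm)
        · rw [heq]
          exact G.irrefl
        · intro hadj
          exact hc iu hiuL iv hivL hgt hadj.symm (hcv.trans hcu.symm)
    calc ∑ i ∈ Lo, g i
        = ∑ γ : Fin d, ∑ i ∈ Lo.filter (fun i => c i = γ), g i :=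
          (Finset.sum_fiberwise Lo c g).symm
      _ ≤ ∑ _γ : Fin d, (1:ℝ) := Finset.sum_le_sum (fun γ _ => hone γ)
      _ = (d:ℝ) := by simp
  have sumBadCharge : ∑ i ∈ Bad, g i + ∑ i ∈ Bad', g i ≤ (2/s) * ∑ v, w v := by
    by_cases hBne : Bad.Nonempty
    · set tB := Bad.card with htB
      have htB0 : 0 < tB := Finset.card_pos.2 hBne
      set ib : Fin tB → Fin m := fun j => ((Bad.orderIsoOfFin rfl) j : Fin m) with hib
      have hib_mono : StrictMono ib := fun a b hab => (Bad.orderIsoOfFin rfl).strictMono hab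
      have hib_mem : ∀ j, ib j ∈ Bad := fun j => ((Bad.orderIsoOfFin rfl) j).2
      have hib_surj : ∀ i ∈ Bad, ∃ j, ib j = i := by
        intro i hi
        refine ⟨(Bad.orderIsoOfFin rfl).symm ⟨i, hi⟩, ?_⟩
        rw [hib]
        exact congrArg Subtype.val ((Bad.orderIsoOfFin rfl).apply_symm_apply ⟨i, hi⟩)
      have hib_ge : ∀ (k : ℕ) (h : k < tB), k ≤ ((ib ⟨k, h⟩ : Fin m) : ℕ) := by
        intro k
        induction k with
        | zero => intro h; exact Nat.zero_le _
        | succ k ihk =>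
          intro h
          have hk : k < tB := by omega
          have hlt : ((ib ⟨k, hk⟩ : Fin m) : ℕ) < ((ib ⟨k+1, h⟩ : Fin m) : ℕ) :=
            hib_mono (show (⟨k, hk⟩ : Fin tB) < ⟨k+1, h⟩ from Fin.mk_lt_mk.2 (by omega))
          have := ihk hk
          omega
      have hmin : Bad.min' hBne = ib ⟨0, htB0⟩ := by
        apply le_antisymm (Finset.min'_le _ _ (hib_mem _))
        obtain ⟨j, hj⟩ := hib_surj (Bad.min' hBne) (Finset.min'_mem _ _)
        rw [← hj]
        exact hib_mono.monotone (by simp [Fin.le_def])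
      set gb : ℕ → ℝ := fun k => if h : k < tB then g (ib ⟨k, h⟩) else 0 with hgb
      set cs : ℕ → ℝ := fun k => gb (k / 2) with hcs
      set K := 2 * tB - 1 with hK
      have hch : ∀ k ∈ Finset.Icc 1 K, ∀ p ∈ Finset.Icc 1 ⌈(s/2) * k⌉₊, cs k ≤ f p := by
        intro k hk p hp
        rcases Finset.mem_Icc.1 hk with ⟨hk1, hk2⟩
        have hjlt : k / 2 < tB := by omega
        have hck : cs k = g (ib ⟨k/2, hjlt⟩) := by
          rw [hcs]; dsimp only
          rw [hgb]; dsimp only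
          rw [dif_pos hjlt]
        set i : Fin m := ib ⟨k/2, hjlt⟩ with hi
        have hbadi : ¬ good i := (Finset.mem_filter.1 (hib_mem _)).2
        have hjle : (k/2 : ℕ) ≤ (i:ℕ) := hib_ge _ hjlt
        have hceil : (⌈(s/2) * k⌉₊ : ℕ) ≤ ⌊s*((i:ℕ)+1)⌋₊ := by
          rw [Nat.ceil_le]
          have h21 : (k:ℕ) ≤ 2*(k/2) + 1 := by omega
          have hk21 : (k:ℝ) ≤ 2*((k/2 : ℕ):ℝ) + 1 := by exact_mod_cast h21
          have e1 : (s/2) * k ≤ (s/2) * (2*((k/2:ℕ):ℝ)+1) :=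
            mul_le_mul_of_nonneg_left hk21 (by positivity)
          have e2 : (s/2) * (2*((k/2:ℕ):ℝ)+1) = s * ((k/2:ℕ):ℝ) + s/2 := by ring
          have e3 : s * ((k/2:ℕ):ℝ) + s/2 ≤ s * ((i:ℕ):ℝ) + s/2 := by
            have hcast : ((k/2:ℕ):ℝ) ≤ ((i:ℕ):ℝ) := by exact_mod_cast hjle
            nlinarith
          have e4 : s * ((i:ℕ):ℝ) + s/2 ≤ s*(((i:ℕ):ℝ)+1) - 1 := by nlinarith
          have e5 : s*(((i:ℕ):ℝ)+1) - 1 ≤ (⌊s*(((i:ℕ):ℝ)+1)⌋₊:ℝ) :=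
            le_of_lt (Nat.sub_one_lt_floor _)
          linarith
        have hpk : p ∈ Finset.Icc 1 ⌊s*((i:ℕ)+1)⌋₊ := by
          rcases Finset.mem_Icc.1 hp with ⟨hp1, hp2⟩
          exact Finset.mem_Icc.2 ⟨hp1, le_trans hp2 hceil⟩
        rw [hck]
        exact hbadf i hbadi p hpk
      have h2s : (1:ℝ) ≤ s/2 := by linarith
      have hcsum := charge_sum (s/2) h2s f hf0 hfmono cs K hch
      have hRHS : (1/(s/2)) * ∑ p ∈ Finset.Icc 1 ⌈(s/2)*K⌉₊, f p ≤ (2/s) * ∑ v, w v := by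
        have he : (1/(s/2)) = 2/s := by
          rw [one_div, inv_div]
        rw [he]
        exact mul_le_mul_of_nonneg_left (hfsum _) (by positivity)
      -- lower bound for the charge sum
      have hc0 : ∀ k, 0 ≤ cs k := by
        intro k
        rw [hcs]; dsimp only
        rw [hgb]; dsimp only
        split
        · exact hg0 _
        · exact le_refl 0
      set odds := (Finset.range tB).image (fun j => 2*j+1) with hodds
      set evens := (Finset.Icc 1 (tB-1)).image (fun j => 2*j) with hevens
      have hosub : odds ⊆ Finset.Icc 1 K := by
        intro z hz
        rcases Finset.mem_image.1 hz with ⟨j, hj, rfl⟩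
        have := Finset.mem_range.1 hj
        exact Finset.mem_Icc.2 ⟨by omega, by omega⟩
      have hesub : evens ⊆ Finset.Icc 1 K := by
        intro z hz
        rcases Finset.mem_image.1 hz with ⟨j, hj, rfl⟩
        rcases Finset.mem_Icc.1 hj with ⟨h1, h2⟩
        exact Finset.mem_Icc.2 ⟨by omega, by omega⟩
      have hoe : Disjoint odds evens := by
        rw [Finset.disjoint_left]
        intro z hzo hze
        rcases Finset.mem_image.1 hzo with ⟨j, _, rfl⟩
        rcases Finset.mem_image.1 hze with ⟨j', _, he⟩
        omega
      have hsodds : ∑ z ∈ odds, cs z = ∑ j ∈ Finset.range tB, gb j := by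
        rw [hodds, Finset.sum_image (by intro a _ b _ hab; simp only at hab; omega)]
        apply Finset.sum_congr rfl
        intro j hj
        rw [hcs]; dsimp only
        congr 1
        omega
      have hsevens : ∑ z ∈ evens, cs z = ∑ j ∈ Finset.Icc 1 (tB-1), gb j := by
        rw [hevens, Finset.sum_image (by intro a _ b _ hab; simp only at hab; omega)]
        apply Finset.sum_congr rfl
        intro j hj
        rw [hcs]; dsimp only
        congr 1
        omega
      have hrangesum : ∑ j ∈ Finset.range tB, gb j = ∑ i ∈ Bad, g i := by
        rw [← Fin.sum_univ_eq_sum_range gb tB]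
        have hpt : ∀ j : Fin tB, gb (j:ℕ) = g (ib j) := by
          intro j
          rw [hgb]; dsimp only
          rw [dif_pos j.isLt]
        rw [Finset.sum_congr rfl (fun j _ => hpt j)]
        exact Finset.sum_bij (fun j _ => ib j) (fun j _ => hib_mem j)
          (fun a _ b _ h => hib_mono.injective h)
          (fun i hi => by obtain ⟨j, hj⟩ := hib_surj i hi; exact ⟨j, Finset.mem_univ _, hj⟩)
          (fun j _ => rfl)
      have hIccsum : ∑ j ∈ Finset.Icc 1 (tB-1), gb j = ∑ i ∈ Bad', g i := by
        have hr : Finset.range tB = insert 0 (Finset.Icc 1 (tB-1)) := by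
          ext z
          simp only [Finset.mem_range, Finset.mem_insert, Finset.mem_Icc]
          omega
        have h0 : (0:ℕ) ∉ Finset.Icc 1 (tB-1) := by simp
        have hs1 : ∑ j ∈ Finset.range tB, gb j = gb 0 + ∑ j ∈ Finset.Icc 1 (tB-1), gb j := by
          rw [hr, Finset.sum_insert h0]
        have hB' : Bad' = Bad.erase (ib ⟨0, htB0⟩) := by
          rw [hBad', dif_pos hBne, hmin]
        have hs2 : ∑ i ∈ Bad, g i = g (ib ⟨0, htB0⟩) + ∑ i ∈ Bad', g i := by
          rw [hB', Finset.add_sum_erase Bad g (hib_mem _)]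
        have hgb0 : gb 0 = g (ib ⟨0, htB0⟩) := by
          rw [hgb]; dsimp only
          rw [dif_pos htB0]
        rw [hrangesum] at hs1
        rw [hgb0] at hs1
        linarith
      have hunion : ∑ z ∈ odds ∪ evens, cs z ≤ ∑ k ∈ Finset.Icc 1 K, cs k :=
        Finset.sum_le_sum_of_subset_of_nonneg (Finset.union_subset hosub hesub)
          (fun k _ _ => hc0 k)
      rw [Finset.sum_union hoe, hsodds, hsevens, hrangesum, hIccsum] at hunion
      linarith
    · have hbe : Bad = ∅ := Finset.not_nonempty_iff_eq_empty.1 hBne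
      have hb'e : Bad' = ∅ := by rw [hBad', dif_neg hBne]
      rw [hbe, hb'e]
      simp only [Finset.sum_empty, add_zero]
      positivity
  have split : ∑ i : Fin m, g i = ∑ i ∈ H, g i + ∑ i ∈ Lo, g i + ∑ i ∈ Bad, g i := by
    have e1 : ∑ i ∈ H, g i + ∑ i ∈ Lo, g i = ∑ i ∈ Good, g i := by
      rw [← Finset.sum_union hdisjHL, hHL]
    have e2 : ∑ i ∈ Good, g i + ∑ i ∈ Bad, g i = ∑ i : Fin m, g i := by
      rw [← Finset.sum_union hdisjGB, hGB]
    linarith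
  rw [sumA, split]
  have : (2:ℝ) * (⌊x + 1⌋₊ : ℝ) = 2 * (d:ℝ) := by rw [hdd]
  rw [this]
  linarith
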